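/- Let T ∈ ℝ^{n₁×…×n_d} be symmetric with respect to a pair of indices {p,q} (i.e., n_p = n_q and interchanging the p-th and q-th indices leaves all entries unchanged). Then there exists a best rank one approximation a·(u₁⊗…⊗u_d) of T with u_q = ±u_p, i.e., symmetric with respect to {p,q}. -/

import Mathlib

noncomputable section

/-- The decomposable tensor `x₁ ⊗ ⋯ ⊗ x_d`, as a multi-indexed array. -/
def dtens {ι : Type*} [Fintype ι] {n : ι → ℕ} (x : ∀ j, Fin (n j) → ℝ) :
    (∀ j, Fin (n j)) → ℝ :=
  fun idx => ∏ j, x j (idx j)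

/-- Entrywise inner product of tensors. -/
def tinner {ι : Type*} [Fintype ι] [DecidableEq ι] {n : ι → ℕ}
    (S T : (∀ j, Fin (n j)) → ℝ) : ℝ :=
  ∑ idx, S idx * T idx

/-- Hilbert–Schmidt norm of a tensor. -/
def hsNorm {ι : Type*} [Fintype ι] [DecidableEq ι] {n : ι → ℕ}
    (T : (∀ j, Fin (n j)) → ℝ) : ℝ :=
  Real.sqrt (∑ idx, T idx ^ 2)

/-- `v` is a unit vector in `ℝ^m`. -/
def isUnitVec {m : ℕ} (v : Fin m → ℝ) : Prop := ∑ i, v i ^ 2 = 1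

/-- The spectral (`(∞,2)`-Schatten) norm of a tensor: the supremum of
`|⟨T, x₁ ⊗ ⋯ ⊗ x_d⟩|` over unit vectors `x_j`. -/
def specNorm {ι : Type*} [Fintype ι] [DecidableEq ι] {n : ι → ℕ}
    (T : (∀ j, Fin (n j)) → ℝ) : ℝ :=
  sSup {r | ∃ x : ∀ j, Fin (n j) → ℝ, (∀ j, isUnitVec (x j)) ∧ r = |tinner T (dtens x)|}

/-- The multi-index obtained from `idx` by interchanging the entries in positions `p`
and `q` (which have equal dimensions). -/
def swapAt {d : ℕ} {n : Fin d → ℕ} (p q : Fin d) (hpq : n p = n q)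
    (idx : ∀ j, Fin (n j)) : ∀ j, Fin (n j) :=
  fun j =>
    if h : j = p then Fin.cast (show n q = n j by rw [h, hpq]) (idx q)
    else if h' : j = q then Fin.cast (show n p = n j by rw [h', hpq]) (idx p)
    else idx j

open Finset

namespace Stmt8Aux

variable {d : ℕ} {n : Fin d → ℕ}

lemma dtens_sq_sum (x : ∀ j, Fin (n j) → ℝ) (hx : ∀ j, isUnitVec (x j)) :
    ∑ idx, (dtens x idx) ^ 2 = 1 := by
  have h : ∀ idx : ∀ j, Fin (n j), (dtens x idx) ^ 2 = ∏ j, (x j (idx j)) ^ 2 := by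
    intro idx; rw [dtens, ← Finset.prod_pow]
  simp_rw [h]
  rw [← Fintype.prod_sum (f := fun j i => (x j i) ^ 2)]
  exact Finset.prod_eq_one (fun j _ => hx j)

variable (p q : Fin d) (hnpq : n p = n q)

/-- Replace positions `p` and `q` of the tuple `x` with `u` and `v`. -/
def ins (x : ∀ j, Fin (n j) → ℝ) (u v : Fin (n p) → ℝ) : ∀ j, Fin (n j) → ℝ :=
  Function.update (Function.update x p u) q (fun k => v (Fin.cast hnpq.symm k))

lemma ins_p (hne : p ≠ q) (x : ∀ j, Fin (n j) → ℝ) (u v : Fin (n p) → ℝ) :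
    ins p q hnpq x u v p = u := by
  rw [ins, Function.update_of_ne hne, Function.update_self]

lemma ins_q (x : ∀ j, Fin (n j) → ℝ) (u v : Fin (n p) → ℝ) :
    ins p q hnpq x u v q = fun k => v (Fin.cast hnpq.symm k) := by
  rw [ins, Function.update_self]

lemma ins_ne (x : ∀ j, Fin (n j) → ℝ) (u v : Fin (n p) → ℝ) (j : Fin d)
    (hjp : j ≠ p) (hjq : j ≠ q) : ins p q hnpq x u v j = x j := by
  rw [ins, Function.update_of_ne hjq, Function.update_of_ne hjp]

lemma ins_self (hne : p ≠ q) (x : ∀ j, Fin (n j) → ℝ) :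
    ins p q hnpq x (x p) (fun i => x q (Fin.cast hnpq i)) = x := by
  funext j
  by_cases hjq : j = q
  · subst hjq
    rw [ins_q p j hnpq]
    funext k
    congr 1
  · by_cases hjp : j = p
    · subst hjp; exact ins_p j q hnpq hne x _ _
    · exact ins_ne p q hnpq x _ _ j hjp hjq


lemma sum_sq_cast (w : Fin (n p) → ℝ) :
    ∑ k : Fin (n q), (w (Fin.cast hnpq.symm k)) ^ 2 = ∑ i, w i ^ 2 := by
  apply Fintype.sum_equiv (finCongr hnpq.symm)
  intro k
  rfl

lemma ins_unit (hne : p ≠ q) (x : ∀ j, Fin (n j) → ℝ) (w : Fin (n p) → ℝ)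
    (hx : ∀ j, isUnitVec (x j)) (hw : isUnitVec w) :
    ∀ j, isUnitVec (ins p q hnpq x w w j) := by
  intro j
  by_cases hjq : j = q
  · subst hjq
    rw [ins_q p j hnpq, isUnitVec]
    rw [sum_sq_cast p j hnpq w]
    exact hw
  · by_cases hjp : j = p
    · subst hjp; rw [ins_p j q hnpq hne]; exact hw
    · rw [ins_ne p q hnpq x _ _ j hjp hjq]; exact hx j

lemma dtens_ins (hne : p ≠ q) (x : ∀ j, Fin (n j) → ℝ) (u v : Fin (n p) → ℝ)
    (idx : ∀ j, Fin (n j)) :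
    dtens (ins p q hnpq x u v) idx
      = u (idx p) * v (Fin.cast hnpq.symm (idx q)) *
          ∏ j ∈ (univ.erase p).erase q, x j (idx j) := by
  rw [dtens, ← Finset.mul_prod_erase _ _ (mem_univ p),
    ← Finset.mul_prod_erase _ _ (show q ∈ univ.erase p from
      mem_erase.2 ⟨hne.symm, mem_univ q⟩)]
  rw [ins_p p q hnpq hne, ins_q p q hnpq]
  rw [show ((univ.erase p).erase q) = ((univ.erase q).erase p) by
    rw [Finset.erase_right_comm]]
  rw [← mul_assoc]
  congr 1
  refine Finset.prod_congr rfl fun j hj => ?_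
  obtain ⟨hjp, hjq, -⟩ : j ≠ p ∧ j ≠ q ∧ True := by
    simp only [mem_erase] at hj; exact ⟨hj.1, hj.2.1, trivial⟩
  rw [ins_ne p q hnpq x _ _ j hjp hjq]


lemma ti_add_left (hne : p ≠ q) (T : (∀ j, Fin (n j)) → ℝ) (x : ∀ j, Fin (n j) → ℝ)
    (u u' v : Fin (n p) → ℝ) :
    tinner T (dtens (ins p q hnpq x (u + u') v))
      = tinner T (dtens (ins p q hnpq x u v)) + tinner T (dtens (ins p q hnpq x u' v)) := by
  simp_rw [tinner, dtens_ins p q hnpq hne, ← Finset.sum_add_distrib]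
  exact Finset.sum_congr rfl fun idx _ => by simp; ring

lemma ti_add_right (hne : p ≠ q) (T : (∀ j, Fin (n j)) → ℝ) (x : ∀ j, Fin (n j) → ℝ)
    (u v v' : Fin (n p) → ℝ) :
    tinner T (dtens (ins p q hnpq x u (v + v')))
      = tinner T (dtens (ins p q hnpq x u v)) + tinner T (dtens (ins p q hnpq x u v')) := by
  simp_rw [tinner, dtens_ins p q hnpq hne, ← Finset.sum_add_distrib]
  exact Finset.sum_congr rfl fun idx _ => by simp; ring

lemma ti_smul_left (hne : p ≠ q) (T : (∀ j, Fin (n j)) → ℝ) (x : ∀ j, Fin (n j) → ℝ)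
    (c : ℝ) (u v : Fin (n p) → ℝ) :
    tinner T (dtens (ins p q hnpq x (c • u) v))
      = c * tinner T (dtens (ins p q hnpq x u v)) := by
  simp_rw [tinner, dtens_ins p q hnpq hne, Finset.mul_sum]
  exact Finset.sum_congr rfl fun idx _ => by simp [smul_eq_mul]; ring

lemma ti_neg_left (hne : p ≠ q) (T : (∀ j, Fin (n j)) → ℝ) (x : ∀ j, Fin (n j) → ℝ)
    (u v : Fin (n p) → ℝ) :
    tinner T (dtens (ins p q hnpq x (-u) v))
      = -tinner T (dtens (ins p q hnpq x u v)) := by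
  simp_rw [tinner, dtens_ins p q hnpq hne, ← Finset.sum_neg_distrib]
  exact Finset.sum_congr rfl fun idx _ => by simp

lemma ti_neg_right (hne : p ≠ q) (T : (∀ j, Fin (n j)) → ℝ) (x : ∀ j, Fin (n j) → ℝ)
    (u v : Fin (n p) → ℝ) :
    tinner T (dtens (ins p q hnpq x u (-v)))
      = -tinner T (dtens (ins p q hnpq x u v)) := by
  simp_rw [tinner, dtens_ins p q hnpq hne, ← Finset.sum_neg_distrib]
  exact Finset.sum_congr rfl fun idx _ => by simp

lemma swapAt_swapAt (hne : p ≠ q) (idx : ∀ j, Fin (n j)) :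
    swapAt p q hnpq (swapAt p q hnpq idx) = idx := by
  funext j
  by_cases hjp : j = p
  · subst hjp
    simp [swapAt, hne, Ne.symm hne]
  · by_cases hjq : j = q
    · subst hjq
      simp [swapAt, hne, Ne.symm hne]
    · simp [swapAt, hjp, hjq]

lemma ti_symm (hne : p ≠ q) (T : (∀ j, Fin (n j)) → ℝ)
    (hsym : ∀ idx, T (swapAt p q hnpq idx) = T idx)
    (x : ∀ j, Fin (n j) → ℝ) (u v : Fin (n p) → ℝ) :
    tinner T (dtens (ins p q hnpq x u v)) = tinner T (dtens (ins p q hnpq x v u)) := by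
  rw [tinner, tinner]
  have hinv : Function.Involutive (swapAt p q hnpq) := swapAt_swapAt p q hnpq hne
  rw [← Equiv.sum_comp (Function.Involutive.toPerm _ hinv)
      (fun idx => T idx * dtens (ins p q hnpq x v u) idx)]
  refine Finset.sum_congr rfl fun idx _ => ?_
  simp only [Function.Involutive.coe_toPerm]
  rw [hsym]
  congr 1
  rw [dtens_ins p q hnpq hne, dtens_ins p q hnpq hne]
  have h1 : (swapAt p q hnpq idx) p = Fin.cast hnpq.symm (idx q) := by
    simp [swapAt]
  have h2 : (swapAt p q hnpq idx) q = Fin.cast hnpq (idx p) := by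
    simp [swapAt, Ne.symm hne]
  rw [h1, h2]
  have h3 : Fin.cast hnpq.symm (Fin.cast hnpq (idx p)) = idx p := by
    exact Fin.ext (by simp)
  rw [h3, mul_comm (v _) (u _)]
  congr 1
  refine Finset.prod_congr rfl fun j hj => ?_
  simp only [mem_erase] at hj
  congr 1
  simp [swapAt, hj.1, hj.2.1]


lemma exists_unit_tuple (hn : ∀ j, 0 < n j) :
    ∃ x : ∀ j, Fin (n j) → ℝ, ∀ j, isUnitVec (x j) := by
  refine ⟨fun j i => if i = ⟨0, hn j⟩ then 1 else 0, fun j => ?_⟩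
  rw [isUnitVec]
  rw [Finset.sum_eq_single ⟨0, hn j⟩]
  · simp
  · intro i _ hi; simp [hi]
  · simp

lemma exists_max (hn : ∀ j, 0 < n j) (T : (∀ j, Fin (n j)) → ℝ) :
    ∃ x : ∀ j, Fin (n j) → ℝ, (∀ j, isUnitVec (x j)) ∧
      ∀ y : ∀ j, Fin (n j) → ℝ, (∀ j, isUnitVec (y j)) →
        |tinner T (dtens y)| ≤ |tinner T (dtens x)| := by
  have hclosed : ∀ m : ℕ, IsClosed {v : Fin m → ℝ | isUnitVec v} := by
    intro m
    exact isClosed_eq (continuous_finset_sum _ fun i _ => (continuous_apply i).pow 2)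
      continuous_const
  have hcpt : ∀ m : ℕ, IsCompact {v : Fin m → ℝ | isUnitVec v} := by
    intro m
    refine (isCompact_closedBall (0 : Fin m → ℝ) 1).of_isClosed_subset (hclosed m) ?_
    intro v hv
    rw [Metric.mem_closedBall, dist_zero_right]
    refine (pi_norm_le_iff_of_nonneg zero_le_one).2 fun i => ?_
    have h1 : v i ^ 2 ≤ 1 := by
      rw [← hv]
      exact Finset.single_le_sum (fun i _ => sq_nonneg (v i)) (Finset.mem_univ i)
    rw [Real.norm_eq_abs]
    nlinarith [sq_abs (v i), abs_nonneg (v i)]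
  have hS : IsCompact (Set.univ.pi fun j => {v : Fin (n j) → ℝ | isUnitVec v}) :=
    isCompact_univ_pi fun j => hcpt (n j)
  have hcont : Continuous fun y : ∀ j, Fin (n j) → ℝ => |tinner T (dtens y)| := by
    refine Continuous.abs ?_
    refine continuous_finset_sum _ fun idx _ => Continuous.mul continuous_const ?_
    exact continuous_finset_prod _ fun j _ =>
      (continuous_apply (idx j)).comp (continuous_apply j)
  obtain ⟨x₀, hx₀⟩ := exists_unit_tuple hn
  have hne : (Set.univ.pi fun j => {v : Fin (n j) → ℝ | isUnitVec v}).Nonempty :=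
    ⟨x₀, fun j _ => hx₀ j⟩
  obtain ⟨x, hxS, hmax⟩ := hS.exists_isMaxOn hne hcont.continuousOn
  exact ⟨x, fun j => hxS j (Set.mem_univ j),
    fun y hy => hmax (Set.mem_univ_pi.2 fun j => hy j)⟩

lemma min_of_max (T : (∀ j, Fin (n j)) → ℝ) (x : ∀ j, Fin (n j) → ℝ)
    (hx : ∀ j, isUnitVec (x j))
    (hmax : ∀ y : ∀ j, Fin (n j) → ℝ, (∀ j, isUnitVec (y j)) →
      |tinner T (dtens y)| ≤ |tinner T (dtens x)|)
    (s : ℝ) (y : ∀ j, Fin (n j) → ℝ) (hy : ∀ j, isUnitVec (y j)) :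
    hsNorm (T - tinner T (dtens x) • dtens x) ≤ hsNorm (T - s • dtens y) := by
  rw [hsNorm, hsNorm]
  apply Real.sqrt_le_sqrt
  have expand : ∀ (c : ℝ) (z : ∀ j, Fin (n j) → ℝ), (∀ j, isUnitVec (z j)) →
      ∑ idx, ((T - c • dtens z) idx) ^ 2
        = ∑ idx, T idx ^ 2 - 2 * c * tinner T (dtens z) + c ^ 2 := by
    intro c z hz
    have h : ∀ idx : ∀ j, Fin (n j), ((T - c • dtens z) idx) ^ 2
        = T idx ^ 2 - 2 * c * (T idx * dtens z idx) + c ^ 2 * (dtens z idx) ^ 2 := by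
      intro idx; simp only [Pi.sub_apply, Pi.smul_apply, smul_eq_mul]; ring
    simp_rw [h, Finset.sum_add_distrib, Finset.sum_sub_distrib, ← Finset.mul_sum]
    rw [dtens_sq_sum z hz, tinner, mul_one]
  rw [expand _ x hx, expand s y hy]
  have hb := hmax y hy
  have hb2 : tinner T (dtens y) ^ 2 ≤ tinner T (dtens x) ^ 2 := by
    nlinarith [sq_abs (tinner T (dtens y)), sq_abs (tinner T (dtens x)),
      abs_nonneg (tinner T (dtens y)), abs_nonneg (tinner T (dtens x))]
  nlinarith [sq_nonneg (s - tinner T (dtens y))]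


lemma ti_smul_right (hne : p ≠ q) (T : (∀ j, Fin (n j)) → ℝ) (x : ∀ j, Fin (n j) → ℝ)
    (c : ℝ) (u v : Fin (n p) → ℝ) :
    tinner T (dtens (ins p q hnpq x u (c • v)))
      = c * tinner T (dtens (ins p q hnpq x u v)) := by
  simp_rw [tinner, dtens_ins p q hnpq hne, Finset.mul_sum]
  exact Finset.sum_congr rfl fun idx _ => by simp [smul_eq_mul]; ring

lemma ins_update (hne : p ≠ q) (x : ∀ j, Fin (n j) → ℝ) (u : Fin (n p) → ℝ) :
    ins p q hnpq x u (fun i => x q (Fin.cast hnpq i)) = Function.update x p u := by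
  funext j
  by_cases hjq : j = q
  · subst hjq
    rw [ins_q p j hnpq, Function.update_of_ne (Ne.symm hne)]
    funext k
    congr 1
  · by_cases hjp : j = p
    · subst hjp
      rw [ins_p j q hnpq hne, Function.update_self]
    · rw [ins_ne p q hnpq x _ _ j hjp hjq, Function.update_of_ne hjp]

lemma normalize_unit {m : ℕ} (w : Fin m → ℝ) (hw : (∑ i, w i ^ 2) ≠ 0) :
    isUnitVec ((Real.sqrt (∑ i, w i ^ 2))⁻¹ • w) := by
  have h0 : (0:ℝ) ≤ ∑ i, w i ^ 2 := Finset.sum_nonneg fun i _ => sq_nonneg _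
  rw [isUnitVec]
  have h : ∀ i, ((Real.sqrt (∑ i, w i ^ 2))⁻¹ • w) i ^ 2
      = (∑ i, w i ^ 2)⁻¹ * w i ^ 2 := by
    intro i
    rw [Pi.smul_apply, smul_eq_mul, mul_pow, ← Real.sqrt_inv, Real.sq_sqrt (by positivity)]
  simp_rw [h, ← Finset.mul_sum]
  exact inv_mul_cancel₀ hw

end Stmt8Aux

open Stmt8Aux in
/-- If `T` is symmetric with respect to a pair of positions `{p, q}`, then `T` has a best
rank one approximation `a · u₁ ⊗ ⋯ ⊗ u_d` with `u_q = ± u_p`. -/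
theorem stmt8 {d : ℕ} {n : Fin d → ℕ} (hn : ∀ j, 0 < n j)
    (T : (∀ j, Fin (n j)) → ℝ)
    (p q : Fin d) (hne : p ≠ q) (hnpq : n p = n q)
    (hsym : ∀ idx, T (swapAt p q hnpq idx) = T idx) :
    ∃ (a : ℝ) (u : ∀ j, Fin (n j) → ℝ), (∀ j, isUnitVec (u j)) ∧
      (∀ (s : ℝ) (x : ∀ j, Fin (n j) → ℝ), (∀ j, isUnitVec (x j)) →
        hsNorm (T - a • dtens u) ≤ hsNorm (T - s • dtens x)) ∧
      ((∀ k, u q (Fin.cast hnpq k) = u p k) ∨ (∀ k, u q (Fin.cast hnpq k) = -u p k)) := by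
  classical
  obtain ⟨x0, hx0, hmax0⟩ := exists_max hn T
  -- Step 1: a maximizer with nonnegative value
  obtain ⟨x1, hx1, hmax1⟩ : ∃ x1 : ∀ j, Fin (n j) → ℝ, (∀ j, isUnitVec (x1 j)) ∧
      ∀ y : ∀ j, Fin (n j) → ℝ, (∀ j, isUnitVec (y j)) →
        |tinner T (dtens y)| ≤ tinner T (dtens x1) := by
    rcases le_or_gt 0 (tinner T (dtens x0)) with h | h
    · exact ⟨x0, hx0, fun y hy => (hmax0 y hy).trans_eq (abs_of_nonneg h)⟩
    · refine ⟨Function.update x0 p (-(x0 p)), ?_, ?_⟩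
      · intro j
        by_cases hjp : j = p
        · subst hjp
          rw [Function.update_self, isUnitVec]
          simp only [Pi.neg_apply, neg_sq]
          exact hx0 j
        · rw [Function.update_of_ne hjp]; exact hx0 j
      · intro y hy
        have hval : tinner T (dtens (Function.update x0 p (-(x0 p))))
            = -tinner T (dtens x0) := by
          rw [← ins_update p q hnpq hne x0, ti_neg_left p q hnpq hne,
            ins_self p q hnpq hne]
        rw [hval]
        exact (hmax0 y hy).trans_eq (abs_of_neg h)
  set M := tinner T (dtens x1) with hMdef
  have hM0 : 0 ≤ M := (abs_nonneg _).trans (hmax1 x1 hx1)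
  -- bilinear form
  set g : (Fin (n p) → ℝ) → (Fin (n p) → ℝ) → ℝ :=
    fun u v => tinner T (dtens (ins p q hnpq x1 u v)) with hgdef
  set u0 : Fin (n p) → ℝ := x1 p with hu0def
  set v0 : Fin (n p) → ℝ := fun i => x1 q (Fin.cast hnpq i) with hv0def
  have hg00 : g u0 v0 = M := by
    simp only [hgdef, hu0def, hv0def]
    rw [ins_self p q hnpq hne]
  have hgsymm : ∀ u v, g u v = g v u := fun u v => ti_symm p q hnpq hne T hsym x1 u v
  -- scaling bound
  have hscale : ∀ w : Fin (n p) → ℝ, |g w w| ≤ M * ∑ i, w i ^ 2 := by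
    intro w
    by_cases hw : (∑ i, w i ^ 2) = 0
    · have hwz : w = 0 := by
        funext i
        have := (Finset.sum_eq_zero_iff_of_nonneg
          (fun i _ => sq_nonneg (w i))).1 hw i (Finset.mem_univ i)
        exact pow_eq_zero_iff (two_ne_zero) |>.1 this
      have : g w w = 0 := by
        rw [hwz, hgdef]
        simp [tinner, dtens_ins p q hnpq hne]
      rw [this, hw, mul_zero, abs_zero]
    · have h0 : (0:ℝ) < ∑ i, w i ^ 2 :=
        (Finset.sum_nonneg fun i _ => sq_nonneg _).lt_of_ne (Ne.symm hw)
      set c : ℝ := Real.sqrt (∑ i, w i ^ 2) with hcdef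
      have hc0 : 0 < c := Real.sqrt_pos.2 h0
      have hc2 : c ^ 2 = ∑ i, w i ^ 2 := Real.sq_sqrt h0.le
      have hw' : isUnitVec (c⁻¹ • w) := normalize_unit w hw
      have hwc : w = c • (c⁻¹ • w) := by
        rw [smul_smul, mul_inv_cancel₀ hc0.ne', one_smul]
      have hgw : g w w = c ^ 2 * g (c⁻¹ • w) (c⁻¹ • w) := by
        conv_lhs => rw [hwc]
        simp only [hgdef]
        rw [ti_smul_left p q hnpq hne, ti_smul_right p q hnpq hne]
        ring
      have hb : |g (c⁻¹ • w) (c⁻¹ • w)| ≤ M :=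
        hmax1 _ (ins_unit p q hnpq hne x1 _ hx1 hw')
      calc |g w w| = c ^ 2 * |g (c⁻¹ • w) (c⁻¹ • w)| := by
            rw [hgw, abs_mul, abs_of_nonneg (by positivity)]
        _ ≤ c ^ 2 * M := by
            exact mul_le_mul_of_nonneg_left hb (by positivity)
        _ = M * ∑ i, w i ^ 2 := by rw [hc2]; ring
  -- parallelogram identity
  have hpar : (∑ i, (u0 + v0) i ^ 2) + (∑ i, (u0 - v0) i ^ 2) = 4 := by
    have h : ∀ i, (u0 + v0) i ^ 2 + (u0 - v0) i ^ 2 = 2 * u0 i ^ 2 + 2 * v0 i ^ 2 := by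
      intro i; simp only [Pi.add_apply, Pi.sub_apply]; ring
    rw [← Finset.sum_add_distrib]
    simp_rw [h]
    rw [Finset.sum_add_distrib, ← Finset.mul_sum, ← Finset.mul_sum]
    have hNu0 : ∑ i, u0 i ^ 2 = 1 := hx1 p
    have hNv0 : ∑ i, v0 i ^ 2 = 1 := by
      have := sum_sq_cast q p hnpq.symm (x1 q)
      rw [hv0def]
      rw [show (∑ i, x1 q (Fin.cast hnpq i) ^ 2)
        = ∑ i : Fin (n p), (x1 q) (Fin.cast hnpq.symm.symm i) ^ 2 from rfl]
      rw [this]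
      exact hx1 q
    rw [hNu0, hNv0]; norm_num
  -- expansion
  have hexp : g (u0 + v0) (u0 + v0) - g (u0 - v0) (u0 - v0) = 4 * M := by
    have hsub : u0 - v0 = u0 + (-v0) := by funext i; simp [sub_eq_add_neg]
    have e1 : g (u0 + v0) (u0 + v0) = g u0 u0 + g u0 v0 + g v0 u0 + g v0 v0 := by
      simp only [hgdef]
      rw [ti_add_left p q hnpq hne, ti_add_right p q hnpq hne,
        ti_add_right p q hnpq hne]
      ring
    have e2 : g (u0 - v0) (u0 - v0) = g u0 u0 - g u0 v0 - g v0 u0 + g v0 v0 := by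
      rw [hsub]
      simp only [hgdef]
      rw [ti_add_left p q hnpq hne, ti_add_right p q hnpq hne,
        ti_add_right p q hnpq hne, ti_neg_left p q hnpq hne,
        ti_neg_right p q hnpq hne, ti_neg_right p q hnpq hne,
        ti_neg_left p q hnpq hne]
      ring
    rw [e1, e2, hgsymm v0 u0, hg00]
    ring
  -- equality case
  have hup : g (u0 + v0) (u0 + v0) = M * ∑ i, (u0 + v0) i ^ 2 := by
    have h1 : g (u0 + v0) (u0 + v0) ≤ M * ∑ i, (u0 + v0) i ^ 2 :=
      (le_abs_self _).trans (hscale (u0 + v0))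
    have h2 : -g (u0 - v0) (u0 - v0) ≤ M * ∑ i, (u0 - v0) i ^ 2 :=
      (neg_le_abs _).trans (hscale (u0 - v0))
    nlinarith [hpar, hexp]
  by_cases hzero : u0 + v0 = 0
  · -- v0 = -u0 : x1 itself is symmetric (with a sign)
    refine ⟨M, x1, hx1, ?_, Or.inr ?_⟩
    · intro s x hx
      exact min_of_max T x1 hx1 (fun y hy => (hmax1 y hy).trans (le_abs_self _)) s x hx
    · intro k
      have := congrFun hzero k
      simp only [Pi.add_apply, Pi.zero_apply] at this
      have hv : v0 k = -u0 k := by linarith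
      rw [hv0def] at hv
      rw [hu0def] at hv
      exact hv
  · -- normalize u0 + v0 and insert it in both slots
    have hN : (∑ i, (u0 + v0) i ^ 2) ≠ 0 := by
      intro h
      apply hzero
      funext i
      have := (Finset.sum_eq_zero_iff_of_nonneg
        (fun i _ => sq_nonneg ((u0 + v0) i))).1 h i (Finset.mem_univ i)
      exact pow_eq_zero_iff (two_ne_zero) |>.1 this
    have h0 : (0:ℝ) < ∑ i, (u0 + v0) i ^ 2 :=
      (Finset.sum_nonneg fun i _ => sq_nonneg _).lt_of_ne (Ne.symm hN)
    set c : ℝ := Real.sqrt (∑ i, (u0 + v0) i ^ 2) with hcdef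
    have hc0 : 0 < c := Real.sqrt_pos.2 h0
    have hc2 : c ^ 2 = ∑ i, (u0 + v0) i ^ 2 := Real.sq_sqrt h0.le
    set w : Fin (n p) → ℝ := c⁻¹ • (u0 + v0) with hwdef
    have hwunit : isUnitVec w := normalize_unit _ hN
    have hgww : g w w = M := by
      simp only [hwdef, hgdef]
      rw [ti_smul_left p q hnpq hne, ti_smul_right p q hnpq hne]
      rw [show tinner T (dtens (ins p q hnpq x1 (u0 + v0) (u0 + v0)))
        = g (u0 + v0) (u0 + v0) from rfl, hup]
      rw [← hc2]
      field_simp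
    set u : ∀ j, Fin (n j) → ℝ := ins p q hnpq x1 w w with hudef
    have hu : ∀ j, isUnitVec (u j) := ins_unit p q hnpq hne x1 w hx1 hwunit
    have hFu : tinner T (dtens u) = M := hgww
    refine ⟨tinner T (dtens u), u, hu, ?_, Or.inl ?_⟩
    · intro s x hx
      refine min_of_max T u hu (fun y hy => ?_) s x hx
      rw [hFu]
      exact (hmax1 y hy).trans_eq (abs_of_nonneg hM0).symm
    · intro k
      have hq : u q = fun k => w (Fin.cast hnpq.symm k) := ins_q p q hnpq x1 w w
      have hp : u p = w := ins_p p q hnpq hne x1 w w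
      rw [hq, hp]
      congr 1
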